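/- Fix a partition R with H(R) < J(R) and suppose b_{i,1} = κ a_i for all i with κ > 0. Then for s with H(R) ≤ s ≤ J(R), the constrained AP power A(s,R) = inf{ ∑_n b_{n,1} v_n ‖p_n − q‖² : ∑_n a_n v_n ‖p_n − c_n‖² ≤ s − H(R) } equals κ·(√(J(R) − H(R)) − √(s − H(R)))², and A(s,R) = 0 for s ≥ J(R). -/

import Mathlib

open Finset Real

set_option maxHeartbeats 1000000 in
/-- Closed form of the constrained AP power A(s,R) for a fixed
partition with b_{i,1} = κ·a_i. -/
theorem constrained_ap_power_closed_form
    (N : ℕ) (hN : 0 < N)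
    (a v : Fin N → ℝ) (ha : ∀ n, 0 < a n) (hv : ∀ n, 0 < v n)
    (κ : ℝ) (hκ : 0 < κ)
    (b : Fin N → ℝ) (hb : ∀ n, b n = κ * a n)
    (c : Fin N → EuclideanSpace ℝ (Fin 2))
    (xstar : EuclideanSpace ℝ (Fin 2))
    (hx : xstar = (∑ n, a n * v n)⁻¹ • ∑ n, (a n * v n) • c n)
    (H J : ℝ) (hHJ : H < J)
    (hJ : J - H = ∑ n, a n * v n * ‖xstar - c n‖ ^ 2)
    (A : ℝ → ℝ)
    (hA : ∀ s, A s = sInf {x | ∃ (p : Fin N → EuclideanSpace ℝ (Fin 2))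
        (q : EuclideanSpace ℝ (Fin 2)),
      (∑ n, b n * v n * ‖p n - q‖ ^ 2) = x ∧
        (∑ n, a n * v n * ‖p n - c n‖ ^ 2) ≤ s - H}) :
    (∀ s, H ≤ s → s ≤ J →
      A s = κ * (Real.sqrt (J - H) - Real.sqrt (s - H)) ^ 2)
    ∧ (∀ s, J ≤ s → A s = 0) := by
  have hwpos : ∀ n, 0 < a n * v n := fun n => mul_pos (ha n) (hv n)
  have hS : 0 < ∑ n, a n * v n :=
    Finset.sum_pos (fun n _ => hwpos n) ⟨⟨0, hN⟩, Finset.mem_univ _⟩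
  have hJH : 0 < J - H := sub_pos.mpr hHJ
  have hJ' : J - H = ∑ n, a n * v n * ‖c n - xstar‖ ^ 2 := by
    rw [hJ]; exact Finset.sum_congr rfl fun n _ => by rw [norm_sub_rev]
  -- centroid identity
  have hcent : ∑ n, (a n * v n) • (c n - xstar) = (0 : EuclideanSpace ℝ (Fin 2)) := by
    have h1 : (∑ n, a n * v n) • xstar = ∑ n, (a n * v n) • c n := by
      rw [hx, smul_smul, mul_inv_cancel₀ hS.ne', one_smul]
    calc ∑ n, (a n * v n) • (c n - xstar)
        = (∑ n, (a n * v n) • c n) - (∑ n, a n * v n) • xstar := by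
          simp only [smul_sub]
          rw [Finset.sum_sub_distrib, Finset.sum_smul]
      _ = 0 := by rw [h1, sub_self]
  -- variance lower bound at an arbitrary q
  have hvar : ∀ q : EuclideanSpace ℝ (Fin 2),
      J - H ≤ ∑ n, a n * v n * ‖c n - q‖ ^ 2 := by
    intro q
    have hsum : ∑ n, a n * v n *
        ((inner ℝ (c n - xstar) (xstar - q)) : ℝ) = 0 := by
      have h2 : ((inner ℝ (∑ n, (a n * v n) • (c n - xstar)) (xstar - q)) : ℝ) = 0 := by
        rw [hcent, inner_zero_left]
      rw [sum_inner] at h2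
      simp_rw [real_inner_smul_left] at h2
      exact h2
    have hexp : ∑ n, a n * v n * ‖c n - q‖ ^ 2
        = (∑ n, a n * v n * ‖c n - xstar‖ ^ 2)
          + 2 * (∑ n, a n * v n * ((inner ℝ (c n - xstar) (xstar - q)) : ℝ))
          + (∑ n, a n * v n) * ‖xstar - q‖ ^ 2 := by
      rw [Finset.mul_sum, Finset.sum_mul, ← Finset.sum_add_distrib,
        ← Finset.sum_add_distrib]
      refine Finset.sum_congr rfl fun n _ => ?_
      have h3 : c n - q = (c n - xstar) + (xstar - q) := by abel
      rw [h3, norm_add_sq_real]; ring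
    rw [hexp, hsum, ← hJ']
    have : 0 ≤ (∑ n, a n * v n) * ‖xstar - q‖ ^ 2 := by positivity
    linarith
  -- weighted Minkowski inequality
  have hmink : ∀ (p : Fin N → EuclideanSpace ℝ (Fin 2))
      (q : EuclideanSpace ℝ (Fin 2)),
      Real.sqrt (∑ n, a n * v n * ‖c n - q‖ ^ 2)
        ≤ Real.sqrt (∑ n, a n * v n * ‖p n - q‖ ^ 2)
          + Real.sqrt (∑ n, a n * v n * ‖p n - c n‖ ^ 2) := by
    intro p q
    set X := Real.sqrt (∑ n, a n * v n * ‖p n - q‖ ^ 2) with hX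
    set Y := Real.sqrt (∑ n, a n * v n * ‖p n - c n‖ ^ 2) with hY
    have hXnn : 0 ≤ X := Real.sqrt_nonneg _
    have hYnn : 0 ≤ Y := Real.sqrt_nonneg _
    have hX2 : X ^ 2 = ∑ n, a n * v n * ‖p n - q‖ ^ 2 :=
      Real.sq_sqrt (Finset.sum_nonneg fun n _ =>
        mul_nonneg (hwpos n).le (by positivity))
    have hY2 : Y ^ 2 = ∑ n, a n * v n * ‖p n - c n‖ ^ 2 :=
      Real.sq_sqrt (Finset.sum_nonneg fun n _ =>
        mul_nonneg (hwpos n).le (by positivity))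
    have hCS : ∑ n, (Real.sqrt (a n * v n) * ‖p n - q‖)
          * (Real.sqrt (a n * v n) * ‖p n - c n‖) ≤ X * Y := by
      have h4 := Real.sum_mul_le_sqrt_mul_sqrt Finset.univ
        (fun n => Real.sqrt (a n * v n) * ‖p n - q‖)
        (fun n => Real.sqrt (a n * v n) * ‖p n - c n‖)
      have e1 : ∑ n, (Real.sqrt (a n * v n) * ‖p n - q‖) ^ 2
          = ∑ n, a n * v n * ‖p n - q‖ ^ 2 :=
        Finset.sum_congr rfl fun n _ => by
          rw [mul_pow, Real.sq_sqrt (hwpos n).le]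
      have e2 : ∑ n, (Real.sqrt (a n * v n) * ‖p n - c n‖) ^ 2
          = ∑ n, a n * v n * ‖p n - c n‖ ^ 2 :=
        Finset.sum_congr rfl fun n _ => by
          rw [mul_pow, Real.sq_sqrt (hwpos n).le]
      rw [e1, e2] at h4
      exact h4
    have key : ∑ n, a n * v n * ‖c n - q‖ ^ 2 ≤ (X + Y) ^ 2 := by
      have step1 : ∑ n, a n * v n * ‖c n - q‖ ^ 2
          ≤ ∑ n, a n * v n * (‖p n - q‖ + ‖p n - c n‖) ^ 2 := by
        refine Finset.sum_le_sum fun n _ => ?_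
        refine mul_le_mul_of_nonneg_left ?_ (hwpos n).le
        refine pow_le_pow_left₀ (norm_nonneg _) ?_ 2
        have h5 : c n - q = (p n - q) - (p n - c n) := by abel
        rw [h5]; exact norm_sub_le _ _
      have step2 : ∑ n, a n * v n * (‖p n - q‖ + ‖p n - c n‖) ^ 2
          = (∑ n, a n * v n * ‖p n - q‖ ^ 2)
            + 2 * (∑ n, (Real.sqrt (a n * v n) * ‖p n - q‖)
              * (Real.sqrt (a n * v n) * ‖p n - c n‖))
            + (∑ n, a n * v n * ‖p n - c n‖ ^ 2) := by
        rw [Finset.mul_sum, ← Finset.sum_add_distrib, ← Finset.sum_add_distrib]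
        refine Finset.sum_congr rfl fun n _ => ?_
        have hs : Real.sqrt (a n * v n) * Real.sqrt (a n * v n) = a n * v n :=
          Real.mul_self_sqrt (hwpos n).le
        nlinarith [hs]
      calc ∑ n, a n * v n * ‖c n - q‖ ^ 2
          ≤ (∑ n, a n * v n * ‖p n - q‖ ^ 2)
            + 2 * (∑ n, (Real.sqrt (a n * v n) * ‖p n - q‖)
              * (Real.sqrt (a n * v n) * ‖p n - c n‖))
            + (∑ n, a n * v n * ‖p n - c n‖ ^ 2) := by
            rw [← step2]; exact step1
        _ ≤ X ^ 2 + 2 * (X * Y) + Y ^ 2 := by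
            rw [hX2, hY2]; linarith [hCS]
        _ = (X + Y) ^ 2 := by ring
    calc Real.sqrt (∑ n, a n * v n * ‖c n - q‖ ^ 2)
        ≤ Real.sqrt ((X + Y) ^ 2) := Real.sqrt_le_sqrt key
      _ = X + Y := Real.sqrt_sq (by linarith)
  -- rewrite b-weighted sums
  have hbw : ∀ (p : Fin N → EuclideanSpace ℝ (Fin 2))
      (q : EuclideanSpace ℝ (Fin 2)),
      ∑ n, b n * v n * ‖p n - q‖ ^ 2 = κ * ∑ n, a n * v n * ‖p n - q‖ ^ 2 := by
    intro p q
    rw [Finset.mul_sum]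
    exact Finset.sum_congr rfl fun n _ => by rw [hb n]; ring
  constructor
  · -- Part 1
    intro s hs1 hs2
    set α := Real.sqrt (J - H) with hα
    set β := Real.sqrt (s - H) with hβ
    have hαpos : 0 < α := Real.sqrt_pos.mpr hJH
    have hβnn : 0 ≤ β := Real.sqrt_nonneg _
    have hα2 : α ^ 2 = J - H := Real.sq_sqrt hJH.le
    have hβ2 : β ^ 2 = s - H := Real.sq_sqrt (by linarith)
    have hβα : β ≤ α := Real.sqrt_le_sqrt (by linarith)
    set t := β / α with ht
    have htα : t * α = β := div_mul_cancel₀ β hαpos.ne'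
    -- the optimal point is feasible
    have hmem : κ * (α - β) ^ 2 ∈ {x | ∃ (p : Fin N → EuclideanSpace ℝ (Fin 2))
        (q : EuclideanSpace ℝ (Fin 2)),
        (∑ n, b n * v n * ‖p n - q‖ ^ 2) = x ∧
          (∑ n, a n * v n * ‖p n - c n‖ ^ 2) ≤ s - H} := by
      refine ⟨fun n => c n + t • (xstar - c n), xstar, ?_, ?_⟩
      · have hpq : ∀ n, ‖(c n + t • (xstar - c n)) - xstar‖ ^ 2
            = (1 - t) ^ 2 * ‖c n - xstar‖ ^ 2 := by
          intro n
          have h6 : (c n + t • (xstar - c n)) - xstar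
              = (1 - t) • (c n - xstar) := by
            rw [sub_smul, one_smul]; module
          rw [h6, norm_smul, mul_pow, Real.norm_eq_abs, sq_abs]
        rw [hbw]
        have : ∑ n, a n * v n * ‖(c n + t • (xstar - c n)) - xstar‖ ^ 2
            = (1 - t) ^ 2 * (J - H) := by
          rw [hJ', Finset.mul_sum]
          exact Finset.sum_congr rfl fun n _ => by rw [hpq n]; ring
        rw [this]
        have h7 : (1 - t) * α = α - β := by rw [sub_mul, one_mul, htα]
        have : (1 - t) ^ 2 * (J - H) = (α - β) ^ 2 := by
          rw [← hα2, ← h7]; ring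
        rw [this]
      · have hpc : ∀ n, ‖(c n + t • (xstar - c n)) - c n‖ ^ 2
            = t ^ 2 * ‖c n - xstar‖ ^ 2 := by
          intro n
          have h8 : (c n + t • (xstar - c n)) - c n = t • (xstar - c n) := by abel
          rw [h8, norm_smul, mul_pow, Real.norm_eq_abs, sq_abs, norm_sub_rev]
        have : ∑ n, a n * v n * ‖(c n + t • (xstar - c n)) - c n‖ ^ 2
            = t ^ 2 * (J - H) := by
          rw [hJ', Finset.mul_sum]
          exact Finset.sum_congr rfl fun n _ => by rw [hpc n]; ring
        rw [this]
        have h9 : t ^ 2 * (J - H) = s - H := by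
          have : (t * α) ^ 2 = β ^ 2 := by rw [htα]
          rw [← hα2, ← hβ2]; nlinarith [this]
        rw [h9]
    -- lower bound
    have hlb : ∀ x ∈ {x | ∃ (p : Fin N → EuclideanSpace ℝ (Fin 2))
        (q : EuclideanSpace ℝ (Fin 2)),
        (∑ n, b n * v n * ‖p n - q‖ ^ 2) = x ∧
          (∑ n, a n * v n * ‖p n - c n‖ ^ 2) ≤ s - H},
        κ * (α - β) ^ 2 ≤ x := by
      rintro x ⟨p, q, rfl, hcon⟩
      rw [hbw]
      refine mul_le_mul_of_nonneg_left ?_ hκ.le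
      set X := Real.sqrt (∑ n, a n * v n * ‖p n - q‖ ^ 2) with hX
      have hX2 : X ^ 2 = ∑ n, a n * v n * ‖p n - q‖ ^ 2 :=
        Real.sq_sqrt (Finset.sum_nonneg fun n _ =>
          mul_nonneg (hwpos n).le (by positivity))
      have hY : Real.sqrt (∑ n, a n * v n * ‖p n - c n‖ ^ 2) ≤ β :=
        Real.sqrt_le_sqrt hcon
      have hq : α ≤ Real.sqrt (∑ n, a n * v n * ‖c n - q‖ ^ 2) :=
        Real.sqrt_le_sqrt (hvar q)
      have hge : α - β ≤ X := by
        have := hmink p q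
        linarith
      calc (α - β) ^ 2 ≤ X ^ 2 :=
            pow_le_pow_left₀ (by linarith) hge 2
        _ = _ := hX2
    rw [hA s]
    exact le_antisymm (csInf_le ⟨κ * (α - β) ^ 2, hlb⟩ hmem)
      (le_csInf ⟨κ * (α - β) ^ 2, hmem⟩ hlb)
  · -- Part 2
    intro s hs
    have hmem : (0 : ℝ) ∈ {x | ∃ (p : Fin N → EuclideanSpace ℝ (Fin 2))
        (q : EuclideanSpace ℝ (Fin 2)),
        (∑ n, b n * v n * ‖p n - q‖ ^ 2) = x ∧
          (∑ n, a n * v n * ‖p n - c n‖ ^ 2) ≤ s - H} := by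
      refine ⟨fun _ => xstar, xstar, by
        simp only [sub_self, norm_zero, ne_eq, OfNat.ofNat_ne_zero,
          not_false_eq_true, zero_pow, mul_zero, Finset.sum_const_zero], ?_⟩
      have : ∑ n, a n * v n * ‖xstar - c n‖ ^ 2 = J - H := hJ.symm
      rw [this]; linarith
    have hlb : ∀ x ∈ {x | ∃ (p : Fin N → EuclideanSpace ℝ (Fin 2))
        (q : EuclideanSpace ℝ (Fin 2)),
        (∑ n, b n * v n * ‖p n - q‖ ^ 2) = x ∧
          (∑ n, a n * v n * ‖p n - c n‖ ^ 2) ≤ s - H}, (0 : ℝ) ≤ x := by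
      rintro x ⟨p, q, rfl, -⟩
      refine Finset.sum_nonneg fun n _ => ?_
      have hbn : 0 < b n := by rw [hb n]; exact mul_pos hκ (ha n)
      exact mul_nonneg (mul_nonneg hbn.le (hv n).le) (by positivity)
    rw [hA s]
    exact le_antisymm (csInf_le ⟨0, hlb⟩ hmem) (le_csInf ⟨0, hmem⟩ hlb)
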